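/- Let c > 0 and let φ : ℝ → ℝ be a nontrivial continuous bounded function with φ(x) → 0 as |x| → ∞, satisfying φ(2c − φ)/3 = K ∗ φ² where K(x) = (1/2)e^{−|x|}. Then 0 < φ(x) < 2c for all x, and sup φ is attained at some finite point and satisfies sup φ < 2c. -/

import Mathlib

open Real MeasureTheory Filter Set

lemma integrable_exp_neg_abs' : Integrable (fun y : ℝ => Real.exp (-|y|)) := by
  have hIoi : IntegrableOn (fun y : ℝ => Real.exp (-|y|)) (Ioi 0) := by
    refine (exp_neg_integrableOn_Ioi 0 one_pos).congr_fun (fun x hx => ?_) measurableSet_Ioi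
    simp [abs_of_pos (show (0:ℝ) < x from hx)]
  have hIic : IntegrableOn (fun y : ℝ => Real.exp (-|y|)) (Iic 0) := by
    rw [← Measure.map_neg_eq_self (volume : Measure ℝ)]
    let m : MeasurableEmbedding fun x : ℝ => -x := (Homeomorph.neg ℝ).measurableEmbedding
    rw [m.integrableOn_map_iff]
    simp_rw [Function.comp_def, abs_neg, neg_preimage, neg_Iic, neg_zero]
    exact Iff.mpr integrableOn_Ici_iff_integrableOn_Ioi hIoi
  have := hIic.union hIoi
  rwa [Iic_union_Ioi, integrableOn_univ] at this

theorem solitary_wave_bounds (c : ℝ) (hc : 0 < c) (φ : ℝ → ℝ)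
    (hφ_cont : Continuous φ) (hφ_bdd : ∃ C, ∀ x, |φ x| ≤ C)
    (hφ_nontrivial : ∃ x, φ x ≠ 0)
    (hφ_decay : Tendsto φ (cocompact ℝ) (nhds 0))
    (heq : ∀ x, φ x * (2 * c - φ x) / 3
      = ∫ y : ℝ, (1 / 2) * Real.exp (-|x - y|) * (φ y) ^ 2) :
    (∀ x, 0 < φ x ∧ φ x < 2 * c)
    ∧ ∃ x₀, (∀ x, φ x ≤ φ x₀) ∧ φ x₀ < 2 * c := by
  obtain ⟨C, hC⟩ := hφ_bdd
  obtain ⟨x₁, hx₁⟩ := hφ_nontrivial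
  -- integrability of the integrand for each x
  have hint : ∀ x : ℝ, Integrable (fun y : ℝ => (1 / 2) * Real.exp (-|x - y|) * (φ y) ^ 2) := by
    intro x
    have hK : Integrable (fun y : ℝ => Real.exp (-|x - y|)) := by
      have := integrable_exp_neg_abs'.comp_sub_left x
      simpa using this
    have h1 : Integrable (fun y : ℝ => ((1 / 2) * (φ y) ^ 2) * Real.exp (-|x - y|)) := by
      refine hK.bdd_mul (c := (1 / 2) * C ^ 2) ?_ (Eventually.of_forall fun y => ?_)
      · exact (continuous_const.mul ((hφ_cont.pow 2))).aestronglyMeasurable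
      · have h2 : |φ y| ≤ C := hC y
        have h3 : (φ y) ^ 2 ≤ C ^ 2 := by
          have := sq_abs (φ y)
          nlinarith [abs_nonneg (φ y)]
        rw [Real.norm_eq_abs, abs_mul, abs_of_nonneg (by positivity : (0:ℝ) ≤ (1/2:ℝ))]
        rw [abs_of_nonneg (sq_nonneg (φ y))]
        nlinarith
    refine h1.congr (Eventually.of_forall fun y => by ring)
  -- strict positivity of the integral
  have hpos : ∀ x : ℝ, 0 < ∫ y : ℝ, (1 / 2) * Real.exp (-|x - y|) * (φ y) ^ 2 := by
    intro x
    rw [integral_pos_iff_support_of_nonneg (fun y => by positivity) (hint x)]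
    have hsub : {y : ℝ | φ y ≠ 0} ⊆ Function.support
        (fun y : ℝ => (1 / 2) * Real.exp (-|x - y|) * (φ y) ^ 2) := by
      intro y hy
      have : (0:ℝ) < (1 / 2) * Real.exp (-|x - y|) * (φ y) ^ 2 := by
        have : φ y ≠ 0 := hy
        positivity
      exact ne_of_gt this
    have hopen : IsOpen {y : ℝ | φ y ≠ 0} := isOpen_ne.preimage hφ_cont
    have hmeas : 0 < volume {y : ℝ | φ y ≠ 0} := hopen.measure_pos volume ⟨x₁, hx₁⟩
    exact lt_of_lt_of_le hmeas (measure_mono hsub)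
  -- the pointwise bounds
  have hbounds : ∀ x, 0 < φ x ∧ φ x < 2 * c := by
    intro x
    have h := hpos x
    rw [← heq x] at h
    have hprod : 0 < φ x * (2 * c - φ x) := by linarith
    constructor
    · by_contra h'
      push_neg at h'
      nlinarith
    · by_contra h'
      push_neg at h'
      nlinarith
  refine ⟨hbounds, ?_⟩
  have h0 : 0 < φ x₁ := (hbounds x₁).1
  have hev : ∀ᶠ x in cocompact ℝ, φ x ≤ φ x₁ :=
    (hφ_decay.eventually_lt_const h0).mono fun x h => h.le
  obtain ⟨x₀, hx₀⟩ := hφ_cont.exists_forall_ge' x₁ hev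
  exact ⟨x₀, hx₀, (hbounds x₀).2⟩
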